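/- For finite sets I, J and k ∈ I, the assignment on generators given by: t_{αβ} ↦ t_{αβ} for α, β ∈ J; t_{ij} ↦ t_{ij} if k ∉ {i,j}; t_{kj} ↦ Σ_{p ∈ J} t_{pj}; t_{ik} ↦ Σ_{p ∈ J} t_{ip}, extends to a well-defined Lie algebra homomorphism ∘_k : t_I ⊕ t_J → t_{(I \ {k}) ⊔ J} (i.e. this assignment respects the defining relations (S), (L), (4T) of the Kohno–Drinfeld Lie algebras). -/

import Mathlib

set_option linter.unusedSectionVars false
set_option maxHeartbeats 1000000


/-! STATEMENT 10: the operadic partial composition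
`∘_k : t_I ⊕ t_J → t_{(I∖{k}) ⊔ J}` is a well-defined Lie algebra homomorphism. -/

section ProdLie

variable {R : Type*} [CommRing R] {L M : Type*} [LieRing L] [LieRing M]

/-- The componentwise Lie ring structure on a binary product. -/
noncomputable instance Prod.instLieRing : LieRing (L × M) :=
  { (inferInstance : AddCommGroup (L × M)) with
    bracket := fun x y => (⁅x.1, y.1⁆, ⁅x.2, y.2⁆)
    add_lie := fun x y z => Prod.ext (add_lie x.1 y.1 z.1) (add_lie x.2 y.2 z.2)
    lie_add := fun x y z => Prod.ext (lie_add x.1 y.1 z.1) (lie_add x.2 y.2 z.2)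
    lie_self := fun x => Prod.ext (lie_self x.1) (lie_self x.2)
    leibniz_lie := fun x y z =>
      Prod.ext (leibniz_lie x.1 y.1 z.1) (leibniz_lie x.2 y.2 z.2) }

/-- The componentwise Lie algebra structure on a binary product. -/
noncomputable instance Prod.instLieAlgebra [LieAlgebra R L] [LieAlgebra R M] :
    LieAlgebra R (L × M) :=
  { lie_smul := fun t x y => Prod.ext (lie_smul t x.1 y.1) (lie_smul t x.2 y.2) }

end ProdLie

variable (k : Type*) [CommRing k] [Algebra ℚ k]

/-- The free generator `t_{ij}` (`i ≠ j`). -/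
noncomputable def kdT {I : Type*} (i j : I) (h : i ≠ j) :
    FreeLieAlgebra k {p : I × I // p.1 ≠ p.2} :=
  FreeLieAlgebra.of k ⟨(i, j), h⟩

/-- The defining relations (S), (L), (4T) of the Kohno–Drinfeld Lie algebra. -/
noncomputable def kdRels (I : Type*) : Set (FreeLieAlgebra k {p : I × I // p.1 ≠ p.2}) :=
  {x | (∃ (i j : I) (h : i ≠ j), x = kdT k i j h - kdT k j i h.symm) ∨
    (∃ (i j i' j' : I) (h : i ≠ j) (h' : i' ≠ j'),
      ({i, j} ∩ {i', j'} : Set I) = ∅ ∧ x = ⁅kdT k i j h, kdT k i' j' h'⁆) ∨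
    (∃ (i j l : I) (hij : i ≠ j) (hil : i ≠ l) (hjl : j ≠ l),
      x = ⁅kdT k i j hij, kdT k i l hil + kdT k j l hjl⁆)}

/-- The ideal of relations. -/
noncomputable def kdIdeal (I : Type*) : LieIdeal k (FreeLieAlgebra k {p : I × I // p.1 ≠ p.2}) :=
  LieSubmodule.lieSpan k _ (kdRels k I)

/-- The Kohno–Drinfeld Lie algebra `t_I(k)`. -/
noncomputable abbrev KD (I : Type*) := FreeLieAlgebra k {p : I × I // p.1 ≠ p.2} ⧸ kdIdeal k I

/-- The image of `t_{ij}` in `t_I(k)`. -/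
noncomputable def kdTbar {I : Type*} (i j : I) (h : i ≠ j) : KD k I :=
  LieSubmodule.Quotient.mk (N := kdIdeal k I) (kdT k i j h)

/-! ### Auxiliary material -/

section AuxGeneral

variable {R L L' : Type*} [CommRing R] [LieRing L] [LieAlgebra R L]
  [LieRing L'] [LieAlgebra R L']

theorem aux_lie_sum {ι : Type*} (s : Finset ι) (x : L) (f : ι → L) :
    ⁅x, ∑ i ∈ s, f i⁆ = ∑ i ∈ s, ⁅x, f i⁆ := by
  induction s using Finset.cons_induction with
  | empty => simp
  | cons a s ha ih => simp only [Finset.sum_cons, lie_add, ih]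

theorem aux_sum_lie {ι : Type*} (s : Finset ι) (x : L) (f : ι → L) :
    ⁅∑ i ∈ s, f i, x⁆ = ∑ i ∈ s, ⁅f i, x⁆ := by
  induction s using Finset.cons_induction with
  | empty => simp
  | cons a s ha ih => simp only [Finset.sum_cons, add_lie, ih]

/-- Lifting a Lie algebra morphism through a quotient by an ideal contained in its kernel. -/
noncomputable def auxQLift (I : LieIdeal R L) (f : L →ₗ⁅R⁆ L') (h : I ≤ f.ker) :
    (L ⧸ I) →ₗ⁅R⁆ L' :=
  { Submodule.liftQ (I : Submodule R L) (f : L →ₗ[R] L')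
      (fun x hx => LieHom.mem_ker.mp (h hx)) with
    map_lie' := by
      intro x y
      refine Quotient.inductionOn₂' x y fun a b => ?_
      exact f.map_lie a b }

theorem auxQLift_mk (I : LieIdeal R L) (f : L →ₗ⁅R⁆ L') (h : I ≤ f.ker) (x : L) :
    auxQLift I f h (LieSubmodule.Quotient.mk (N := I) x) = f x := rfl

/-- `{x | ⁅f x, c⁆ = 0}` is a Lie subalgebra. -/
def auxCommR (f : L →ₗ⁅R⁆ L') (c : L') : LieSubalgebra R L where
  carrier := {x | ⁅f x, c⁆ = 0}
  add_mem' := by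
    intro x y hx hy
    simp only [Set.mem_setOf_eq] at *
    rw [map_add f, add_lie, hx, hy, add_zero]
  zero_mem' := by simp
  smul_mem' := by
    intro t x hx
    simp only [Set.mem_setOf_eq] at *
    rw [map_smul f, smul_lie, hx, smul_zero]
  lie_mem' := by
    intro x y hx hy
    simp only [Set.mem_setOf_eq] at *
    rw [f.map_lie, lie_lie, hx, hy]
    simp

/-- `{x | ⁅c, f x⁆ = 0}` is a Lie subalgebra. -/
def auxCommL (f : L →ₗ⁅R⁆ L') (c : L') : LieSubalgebra R L where
  carrier := {x | ⁅c, f x⁆ = 0}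
  add_mem' := by
    intro x y hx hy
    simp only [Set.mem_setOf_eq] at *
    rw [map_add f, lie_add, hx, hy, add_zero]
  zero_mem' := by simp
  smul_mem' := by
    intro t x hx
    simp only [Set.mem_setOf_eq] at *
    rw [map_smul f, lie_smul, hx, smul_zero]
  lie_mem' := by
    intro x y hx hy
    simp only [Set.mem_setOf_eq] at *
    rw [f.map_lie, leibniz_lie, hx, hy]
    simp

/-- The free Lie algebra is generated (as a Lie subalgebra) by its generators. -/
theorem freeLie_induction {X : Type*} (S : LieSubalgebra R (FreeLieAlgebra R X))
    (h : ∀ x, FreeLieAlgebra.of R x ∈ S) (a : FreeLieAlgebra R X) : a ∈ S := by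
  let g : FreeLieAlgebra R X →ₗ⁅R⁆ S :=
    FreeLieAlgebra.lift R fun x => (⟨FreeLieAlgebra.of R x, h x⟩ : S)
  have key : S.incl.comp g = LieHom.id := by
    apply FreeLieAlgebra.hom_ext
    intro x
    simp only [LieHom.comp_apply, LieHom.id_apply, g, FreeLieAlgebra.lift_of_apply]
    rfl
  have := DFunLike.congr_fun key a
  simp only [LieHom.comp_apply, LieHom.id_apply] at this
  rw [← this]
  exact (g a).2

theorem pair_inter_empty {I : Type*} {i j i' j' : I} (h1 : i ≠ i') (h2 : i ≠ j')
    (h3 : j ≠ i') (h4 : j ≠ j') : ({i, j} ∩ {i', j'} : Set I) = ∅ := by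
  apply Set.eq_empty_iff_forall_notMem.mpr
  rintro x ⟨hx1, hx2⟩
  simp only [Set.mem_insert_iff, Set.mem_singleton_iff] at hx1 hx2
  rcases hx1 with rfl | rfl <;> rcases hx2 with rfl | rfl <;> simp_all

theorem ne_of_pair_inter_empty {I : Type*} {i j i' j' : I}
    (hd : ({i, j} ∩ {i', j'} : Set I) = ∅) : i ≠ i' ∧ i ≠ j' ∧ j ≠ i' ∧ j ≠ j' := by
  have H := Set.eq_empty_iff_forall_notMem.mp hd
  refine ⟨fun e => H i ⟨by simp, by simp [e]⟩, fun e => H i ⟨by simp, by simp [e]⟩,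
    fun e => H j ⟨by simp, by simp [e]⟩, fun e => H j ⟨by simp, by simp [e]⟩⟩

end AuxGeneral

section AuxKD

theorem kd_mk_rel {I : Type*} {x : FreeLieAlgebra k {p : I × I // p.1 ≠ p.2}}
    (hx : x ∈ kdRels k I) : (LieSubmodule.Quotient.mk (N := kdIdeal k I) x) = 0 :=
  LieSubmodule.Quotient.mk_eq_zero'.mpr (LieSubmodule.subset_lieSpan hx)

theorem kdTbar_symm {I : Type*} (i j : I) (h : i ≠ j) :
    kdTbar k i j h = kdTbar k j i h.symm := by
  have h0 := kd_mk_rel k (I := I) (Or.inl ⟨i, j, h, rfl⟩)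
  have h1 : (LieSubmodule.Quotient.mk (N := kdIdeal k I)
      (kdT k i j h - kdT k j i h.symm)) = kdTbar k i j h - kdTbar k j i h.symm := rfl
  rw [h1] at h0
  exact sub_eq_zero.mp h0

theorem kdTbar_L {I : Type*} (i j i' j' : I) (h : i ≠ j) (h' : i' ≠ j')
    (hd : ({i, j} ∩ {i', j'} : Set I) = ∅) :
    ⁅kdTbar k i j h, kdTbar k i' j' h'⁆ = 0 := by
  have h0 := kd_mk_rel k (I := I) (Or.inr (Or.inl ⟨i, j, i', j', h, h', hd, rfl⟩))
  rw [kdTbar, kdTbar, ← LieSubmodule.Quotient.mk_bracket]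
  exact h0

theorem kdTbar_4T {I : Type*} (i j l : I) (hij : i ≠ j) (hil : i ≠ l) (hjl : j ≠ l) :
    ⁅kdTbar k i j hij, kdTbar k i l hil + kdTbar k j l hjl⁆ = 0 := by
  have h0 := kd_mk_rel k (I := I) (Or.inr (Or.inr ⟨i, j, l, hij, hil, hjl, rfl⟩))
  rw [kdTbar, kdTbar, kdTbar, ← Submodule.Quotient.mk_add, ← LieSubmodule.Quotient.mk_bracket]
  exact h0

variable (I J : Type*) [Fintype J] (k₀ : I)

/-- The image of the generator `t_{ij}` of `t_I` under the partial composition. -/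
noncomputable def cgI (p : {p : I × I // p.1 ≠ p.2}) : KD k ({i : I // i ≠ k₀} ⊕ J) :=
  letI : DecidableEq I := Classical.decEq I
  if hi : p.1.1 = k₀ then
    ∑ q : J, kdTbar k (Sum.inr q : {i : I // i ≠ k₀} ⊕ J)
      (Sum.inl ⟨p.1.2, fun e => p.2 (hi.trans e.symm)⟩) (by simp)
  else if hj : p.1.2 = k₀ then
    ∑ q : J, kdTbar k (Sum.inl ⟨p.1.1, hi⟩ : {i : I // i ≠ k₀} ⊕ J) (Sum.inr q) (by simp)
  else
    kdTbar k (Sum.inl ⟨p.1.1, hi⟩ : {i : I // i ≠ k₀} ⊕ J) (Sum.inl ⟨p.1.2, hj⟩)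
      (by simp only [ne_eq, Sum.inl.injEq, Subtype.mk.injEq]; exact p.2)

/-- The image of the generator `t_{αβ}` of `t_J` under the partial composition. -/
noncomputable def cgJ (q : {p : J × J // p.1 ≠ p.2}) : KD k ({i : I // i ≠ k₀} ⊕ J) :=
  kdTbar k (Sum.inr q.1.1 : {i : I // i ≠ k₀} ⊕ J) (Sum.inr q.1.2)
    (fun e => q.2 (Sum.inr_injective e))

theorem cgI_eq_gen (i j : I) (h : i ≠ j) (hi : i ≠ k₀) (hj : j ≠ k₀) :
    cgI k I J k₀ ⟨(i, j), h⟩ =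
      kdTbar k (Sum.inl ⟨i, hi⟩ : {i : I // i ≠ k₀} ⊕ J) (Sum.inl ⟨j, hj⟩)
        (by simp only [ne_eq, Sum.inl.injEq, Subtype.mk.injEq]; exact h) := by
  simp only [cgI]
  rw [dif_neg hi, dif_neg hj]

theorem cgI_eq_left (j : I) (h : k₀ ≠ j) :
    cgI k I J k₀ ⟨(k₀, j), h⟩ =
      ∑ q : J, kdTbar k (Sum.inr q : {i : I // i ≠ k₀} ⊕ J) (Sum.inl ⟨j, h.symm⟩)
        (by simp) := by
  simp only [cgI]
  rw [dif_pos trivial]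

theorem cgI_eq_right (i : I) (h : i ≠ k₀) :
    cgI k I J k₀ ⟨(i, k₀), h⟩ =
      ∑ q : J, kdTbar k (Sum.inl ⟨i, h⟩ : {i : I // i ≠ k₀} ⊕ J) (Sum.inr q)
        (by simp) := by
  simp only [cgI]
  rw [dif_neg h, dif_pos trivial]

end AuxKD

section AuxComp

variable (I J : Type*) [Fintype J] (k₀ : I)

/-- The lift of `cgI` to the free Lie algebra. -/
noncomputable def FIhom :
    FreeLieAlgebra k {p : I × I // p.1 ≠ p.2} →ₗ⁅k⁆ KD k ({i : I // i ≠ k₀} ⊕ J) :=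
  FreeLieAlgebra.lift k (cgI k I J k₀)

/-- The lift of `cgJ` to the free Lie algebra. -/
noncomputable def FJhom :
    FreeLieAlgebra k {p : J × J // p.1 ≠ p.2} →ₗ⁅k⁆ KD k ({i : I // i ≠ k₀} ⊕ J) :=
  FreeLieAlgebra.lift k (cgJ k I J k₀)

theorem FIhom_T (i j : I) (h : i ≠ j) :
    FIhom k I J k₀ (kdT k i j h) = cgI k I J k₀ ⟨(i, j), h⟩ :=
  FreeLieAlgebra.lift_of_apply _ _

theorem FJhom_T (a b : J) (h : a ≠ b) :
    FJhom k I J k₀ (kdT k a b h) = cgJ k I J k₀ ⟨(a, b), h⟩ :=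
  FreeLieAlgebra.lift_of_apply _ _

theorem FI_rels : ∀ x ∈ kdRels k I, FIhom k I J k₀ x = 0 := by
  rintro x (⟨i, j, h, rfl⟩ | ⟨i, j, i', j', h, h', hd, rfl⟩ | ⟨i, j, l, hij, hil, hjl, rfl⟩)
  · -- (S)
    rw [map_sub, FIhom_T, FIhom_T, sub_eq_zero]
    by_cases hi : i = k₀
    · subst hi
      rw [cgI_eq_left k I J i j h, cgI_eq_right k I J i j h.symm]
      exact Finset.sum_congr rfl fun q _ => kdTbar_symm k _ _ _
    · by_cases hj : j = k₀
      · subst hj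
        rw [cgI_eq_right k I J j i hi, cgI_eq_left k I J j i (Ne.symm hi)]
        exact Finset.sum_congr rfl fun q _ => kdTbar_symm k _ _ _
      · rw [cgI_eq_gen k I J k₀ i j h hi hj, cgI_eq_gen k I J k₀ j i h.symm hj hi]
        exact kdTbar_symm k _ _ _
  · -- (L)
    obtain ⟨n1, n2, n3, n4⟩ := ne_of_pair_inter_empty hd
    rw [LieHom.map_lie, FIhom_T, FIhom_T]
    by_cases hi : i = k₀
    · subst hi
      rw [cgI_eq_left k I J i j h, cgI_eq_gen k I J i i' j' h' (Ne.symm n1) (Ne.symm n2),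
        aux_sum_lie]
      exact Finset.sum_eq_zero fun q _ => kdTbar_L k _ _ _ _ _ _
        (pair_inter_empty (by simp) (by simp) (by simpa using n3) (by simpa using n4))
    · by_cases hj : j = k₀
      · subst hj
        rw [cgI_eq_right k I J j i hi, cgI_eq_gen k I J j i' j' h' (Ne.symm n3) (Ne.symm n4),
          aux_sum_lie]
        exact Finset.sum_eq_zero fun q _ => kdTbar_L k _ _ _ _ _ _
          (pair_inter_empty (by simpa using n1) (by simpa using n2) (by simp) (by simp))
      · by_cases hi' : i' = k₀
        · subst hi'
          rw [cgI_eq_gen k I J i' i j h hi hj, cgI_eq_left k I J i' j' h', aux_lie_sum]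
          exact Finset.sum_eq_zero fun q _ => kdTbar_L k _ _ _ _ _ _
            (pair_inter_empty (by simp) (by simpa using n2) (by simp) (by simpa using n4))
        · by_cases hj' : j' = k₀
          · subst hj'
            rw [cgI_eq_gen k I J j' i j h hi hj, cgI_eq_right k I J j' i' hi', aux_lie_sum]
            exact Finset.sum_eq_zero fun q _ => kdTbar_L k _ _ _ _ _ _
              (pair_inter_empty (by simpa using n1) (by simp) (by simpa using n3) (by simp))
          · rw [cgI_eq_gen k I J k₀ i j h hi hj, cgI_eq_gen k I J k₀ i' j' h' hi' hj']
            exact kdTbar_L k _ _ _ _ _ _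
              (pair_inter_empty (by simpa using n1) (by simpa using n2)
                (by simpa using n3) (by simpa using n4))
  · -- (4T)
    rw [LieHom.map_lie, map_add, FIhom_T, FIhom_T, FIhom_T]
    by_cases hi : i = k₀
    · subst hi
      rw [cgI_eq_left k I J i j hij, cgI_eq_left k I J i l hil,
        cgI_eq_gen k I J i j l hjl (Ne.symm hij) (Ne.symm hil), aux_sum_lie]
      refine Finset.sum_eq_zero fun p _ => ?_
      rw [lie_add]
      have hsum : ⁅kdTbar k (Sum.inr p : {i' : I // i' ≠ i} ⊕ J)
            (Sum.inl ⟨j, Ne.symm hij⟩) (by simp),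
          ∑ q : J, kdTbar k (Sum.inr q : {i' : I // i' ≠ i} ⊕ J)
            (Sum.inl ⟨l, Ne.symm hil⟩) (by simp)⁆ =
          ⁅kdTbar k (Sum.inr p : {i' : I // i' ≠ i} ⊕ J)
            (Sum.inl ⟨j, Ne.symm hij⟩) (by simp),
          kdTbar k (Sum.inr p : {i' : I // i' ≠ i} ⊕ J)
            (Sum.inl ⟨l, Ne.symm hil⟩) (by simp)⁆ := by
        rw [aux_lie_sum]
        refine Finset.sum_eq_single p (fun q _ hq => kdTbar_L k _ _ _ _ _ _
          (pair_inter_empty (by simpa using Ne.symm hq) (by simp) (by simp)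
            (by simpa using hjl))) (by simp)
      rw [hsum, ← lie_add]
      exact kdTbar_4T k _ _ _ (by simp) (by simp) (by simpa using hjl)
    · by_cases hj : j = k₀
      · subst hj
        rw [cgI_eq_right k I J j i hi, cgI_eq_gen k I J j i l hil hi (Ne.symm hjl),
          cgI_eq_left k I J j l hjl, aux_sum_lie]
        refine Finset.sum_eq_zero fun p _ => ?_
        rw [lie_add]
        have hsum : ⁅kdTbar k (Sum.inl ⟨i, hi⟩ : {i' : I // i' ≠ j} ⊕ J)
              (Sum.inr p) (by simp),
            ∑ q : J, kdTbar k (Sum.inr q : {i' : I // i' ≠ j} ⊕ J)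
              (Sum.inl ⟨l, Ne.symm hjl⟩) (by simp)⁆ =
            ⁅kdTbar k (Sum.inl ⟨i, hi⟩ : {i' : I // i' ≠ j} ⊕ J)
              (Sum.inr p) (by simp),
            kdTbar k (Sum.inr p : {i' : I // i' ≠ j} ⊕ J)
              (Sum.inl ⟨l, Ne.symm hjl⟩) (by simp)⁆ := by
          rw [aux_lie_sum]
          refine Finset.sum_eq_single p (fun q _ hq => kdTbar_L k _ _ _ _ _ _
            (pair_inter_empty (by simp) (by simpa using hil) (by simpa using Ne.symm hq)
              (by simp))) (by simp)
        rw [hsum, ← lie_add]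
        exact kdTbar_4T k _ _ _ (by simp) (by simpa using hil) (by simp)
      · by_cases hl : l = k₀
        · subst hl
          rw [cgI_eq_gen k I J l i j hij hi hj, cgI_eq_right k I J l i hi,
            cgI_eq_right k I J l j hj, ← Finset.sum_add_distrib, aux_lie_sum]
          exact Finset.sum_eq_zero fun p _ =>
            kdTbar_4T k _ _ _ (by simpa using hij) (by simp) (by simp)
        · rw [cgI_eq_gen k I J k₀ i j hij hi hj, cgI_eq_gen k I J k₀ i l hil hi hl,
            cgI_eq_gen k I J k₀ j l hjl hj hl]
          exact kdTbar_4T k _ _ _ (by simpa using hij) (by simpa using hil)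
            (by simpa using hjl)

theorem FJ_rels : ∀ x ∈ kdRels k J, FJhom k I J k₀ x = 0 := by
  rintro x (⟨a, b, h, rfl⟩ | ⟨a, b, a', b', h, h', hd, rfl⟩ | ⟨a, b, c, hab, hac, hbc, rfl⟩)
  · rw [map_sub, FJhom_T, FJhom_T, sub_eq_zero]
    simp only [cgJ]
    exact kdTbar_symm k _ _ _
  · obtain ⟨n1, n2, n3, n4⟩ := ne_of_pair_inter_empty hd
    rw [LieHom.map_lie, FJhom_T, FJhom_T]
    simp only [cgJ]
    exact kdTbar_L k _ _ _ _ _ _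
      (pair_inter_empty (by simpa using n1) (by simpa using n2)
        (by simpa using n3) (by simpa using n4))
  · rw [LieHom.map_lie, map_add, FJhom_T, FJhom_T, FJhom_T]
    simp only [cgJ]
    exact kdTbar_4T k _ _ _ (by simpa using hab) (by simpa using hac) (by simpa using hbc)

theorem cross_sum (a : {i : I // i ≠ k₀}) (α β : J) (hαβ : α ≠ β) :
    ∑ r : J, ⁅kdTbar k (Sum.inr r : {i : I // i ≠ k₀} ⊕ J) (Sum.inl a) (by simp),
      kdTbar k (Sum.inr α : {i : I // i ≠ k₀} ⊕ J) (Sum.inr β) (by simpa using hαβ)⁆ = 0 := by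
  classical
  rw [← Finset.sum_subset (Finset.subset_univ ({α, β} : Finset J))
    (fun r _ hr => by
      have h1 : r ≠ α := fun e => hr (by simp [e])
      have h2 : r ≠ β := fun e => hr (by simp [e])
      exact kdTbar_L k _ _ _ _ _ _
        (pair_inter_empty (by simpa using h1) (by simpa using h2) (by simp) (by simp)))]
  rw [Finset.sum_pair hαβ, ← add_lie]
  have h4 := kdTbar_4T k (Sum.inr α : {i : I // i ≠ k₀} ⊕ J) (Sum.inr β) (Sum.inl a)
    (by simpa using hαβ) (by simp) (by simp)
  rw [← lie_skew, h4, neg_zero]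

theorem cross_gen (p : {p : I × I // p.1 ≠ p.2}) (q : {p : J × J // p.1 ≠ p.2}) :
    ⁅cgI k I J k₀ p, cgJ k I J k₀ q⁆ = 0 := by
  obtain ⟨⟨i, j⟩, hij⟩ := p
  obtain ⟨⟨α, β⟩, hαβ⟩ := q
  simp only [cgJ]
  by_cases hi : i = k₀
  · subst hi
    rw [cgI_eq_left k I J i j hij, aux_sum_lie]
    exact cross_sum k I J i ⟨j, Ne.symm hij⟩ α β hαβ
  · by_cases hj : j = k₀
    · subst hj
      rw [cgI_eq_right k I J j i hi, aux_sum_lie]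
      calc ∑ r : J, ⁅kdTbar k (Sum.inl ⟨i, hi⟩ : {i' : I // i' ≠ j} ⊕ J) (Sum.inr r) (by simp),
            kdTbar k (Sum.inr α : {i' : I // i' ≠ j} ⊕ J) (Sum.inr β) (by simpa using hαβ)⁆
          = ∑ r : J, ⁅kdTbar k (Sum.inr r : {i' : I // i' ≠ j} ⊕ J) (Sum.inl ⟨i, hi⟩) (by simp),
            kdTbar k (Sum.inr α : {i' : I // i' ≠ j} ⊕ J) (Sum.inr β) (by simpa using hαβ)⁆ :=
            Finset.sum_congr rfl fun r _ => by
              rw [kdTbar_symm k (Sum.inl ⟨i, hi⟩ : {i' : I // i' ≠ j} ⊕ J) (Sum.inr r)]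
        _ = 0 := cross_sum k I J j ⟨i, hi⟩ α β hαβ
    · rw [cgI_eq_gen k I J k₀ i j hij hi hj]
      exact kdTbar_L k _ _ _ _ _ _
        (pair_inter_empty (by simp) (by simp) (by simp) (by simp))

theorem cross_all (a : FreeLieAlgebra k {p : I × I // p.1 ≠ p.2})
    (b : FreeLieAlgebra k {p : J × J // p.1 ≠ p.2}) :
    ⁅FIhom k I J k₀ a, FJhom k I J k₀ b⁆ = 0 := by
  have step1 : ∀ (q : {p : J × J // p.1 ≠ p.2}) (a : FreeLieAlgebra k {p : I × I // p.1 ≠ p.2}),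
      ⁅FIhom k I J k₀ a, cgJ k I J k₀ q⁆ = 0 := by
    intro q a
    refine freeLie_induction (R := k) (auxCommR (FIhom k I J k₀) (cgJ k I J k₀ q))
      (fun p => ?_) a
    show ⁅FIhom k I J k₀ (FreeLieAlgebra.of k p), cgJ k I J k₀ q⁆ = 0
    rw [show FIhom k I J k₀ (FreeLieAlgebra.of k p) = cgI k I J k₀ p from
      FreeLieAlgebra.lift_of_apply _ p]
    exact cross_gen k I J k₀ p q
  refine freeLie_induction (R := k) (auxCommL (FJhom k I J k₀) (FIhom k I J k₀ a))
    (fun q => ?_) b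
  show ⁅FIhom k I J k₀ a, FJhom k I J k₀ (FreeLieAlgebra.of k q)⁆ = 0
  rw [show FJhom k I J k₀ (FreeLieAlgebra.of k q) = cgJ k I J k₀ q from
    FreeLieAlgebra.lift_of_apply _ q]
  exact step1 q a

end AuxComp

/-- the assignment `t_{αβ} ↦ t_{αβ}` (`α, β ∈ J`), `t_{ij} ↦ t_{ij}`
(`k₀ ∉ {i,j}`), `t_{k₀ j} ↦ Σ_{p ∈ J} t_{pj}`, `t_{i k₀} ↦ Σ_{p ∈ J} t_{ip}` extends to a
Lie algebra homomorphism `t_I ⊕ t_J → t_{(I∖{k₀}) ⊔ J}`. -/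
theorem kd_partial_composition (k : Type*) [CommRing k] [Algebra ℚ k]
    (I J : Type*) [Fintype J] (k₀ : I) :
    ∃ φ : (KD k I × KD k J) →ₗ⁅k⁆ KD k ({i : I // i ≠ k₀} ⊕ J),
      (∀ (α β : J) (h : α ≠ β),
        φ (0, kdTbar k α β h) =
          kdTbar k (Sum.inr α : {i : I // i ≠ k₀} ⊕ J) (Sum.inr β)
            (Sum.inr_injective.ne h)) ∧
      (∀ (i j : I) (h : i ≠ j) (hi : i ≠ k₀) (hj : j ≠ k₀),
        φ (kdTbar k i j h, 0) =
          kdTbar k (Sum.inl ⟨i, hi⟩ : {i : I // i ≠ k₀} ⊕ J) (Sum.inl ⟨j, hj⟩)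
            (by simpa using h)) ∧
      (∀ (j : I) (h : k₀ ≠ j) (hj : j ≠ k₀),
        φ (kdTbar k k₀ j h, 0) =
          ∑ p : J, kdTbar k (Sum.inr p : {i : I // i ≠ k₀} ⊕ J) (Sum.inl ⟨j, hj⟩)
            (by simp)) ∧
      (∀ (i : I) (h : i ≠ k₀),
        φ (kdTbar k i k₀ h, 0) =
          ∑ p : J, kdTbar k (Sum.inl ⟨i, h⟩ : {i : I // i ≠ k₀} ⊕ J) (Sum.inr p)
            (by simp)) := by
  have hkerI : kdIdeal k I ≤ (FIhom k I J k₀).ker :=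
    LieSubmodule.lieSpan_le.mpr fun x hx => LieHom.mem_ker.mpr (FI_rels k I J k₀ x hx)
  have hkerJ : kdIdeal k J ≤ (FJhom k I J k₀).ker :=
    LieSubmodule.lieSpan_le.mpr fun x hx => LieHom.mem_ker.mpr (FJ_rels k I J k₀ x hx)
  let φ₁ := auxQLift (kdIdeal k I) (FIhom k I J k₀) hkerI
  let φ₂ := auxQLift (kdIdeal k J) (FJhom k I J k₀) hkerJ
  have hφ₁ : ∀ a, φ₁ (LieSubmodule.Quotient.mk (N := kdIdeal k I) a) = FIhom k I J k₀ a :=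
    fun a => rfl
  have hφ₂ : ∀ b, φ₂ (LieSubmodule.Quotient.mk (N := kdIdeal k J) b) = FJhom k I J k₀ b :=
    fun b => rfl
  have crossQ : ∀ x y, ⁅φ₁ x, φ₂ y⁆ = 0 := fun x y =>
    Quotient.inductionOn₂' x y fun a b => cross_all k I J k₀ a b
  refine ⟨{ toFun := fun x => φ₁ x.1 + φ₂ x.2
            map_add' := fun x y => by
              show φ₁ (x.1 + y.1) + φ₂ (x.2 + y.2) = _
              rw [map_add φ₁, map_add φ₂]
              abel
            map_smul' := fun t x => by
              show φ₁ (t • x.1) + φ₂ (t • x.2) = _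
              rw [map_smul φ₁, map_smul φ₂, ← smul_add]
              rfl
            map_lie' := by
              intro x y
              show φ₁ ⁅x.1, y.1⁆ + φ₂ ⁅x.2, y.2⁆ = ⁅φ₁ x.1 + φ₂ x.2, φ₁ y.1 + φ₂ y.2⁆
              have hc : ⁅φ₂ x.2, φ₁ y.1⁆ = 0 := by
                rw [← lie_skew, crossQ, neg_zero]
              rw [lie_add, add_lie, add_lie, crossQ x.1 y.2, hc, LieHom.map_lie, LieHom.map_lie]
              abel }, ?_, ?_, ?_, ?_⟩
  · intro α β h
    show φ₁ 0 + φ₂ (kdTbar k α β h) = _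
    rw [map_zero φ₁, zero_add, kdTbar, hφ₂, FJhom_T]
    rfl
  · intro i j h hi hj
    show φ₁ (kdTbar k i j h) + φ₂ 0 = _
    rw [map_zero φ₂, add_zero, kdTbar, hφ₁, FIhom_T]
    exact cgI_eq_gen k I J k₀ i j h hi hj
  · intro j h hj
    show φ₁ (kdTbar k k₀ j h) + φ₂ 0 = _
    rw [map_zero φ₂, add_zero, kdTbar, hφ₁, FIhom_T]
    exact cgI_eq_left k I J k₀ j h
  · intro i h
    show φ₁ (kdTbar k i k₀ h) + φ₂ 0 = _
    rw [map_zero φ₂, add_zero, kdTbar, hφ₁, FIhom_T]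
    exact cgI_eq_right k I J k₀ i h
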